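/- Let a>0, D>0, μ≥0, t>0 and r>a. Then ∫_0^t κ(τ,r) e^{−μτ} dτ = (a/(2r))·[ exp(−√(μ/D)(r−a))·erfc((r−a)/√(4Dt) − √(μt)) + exp(√(μ/D)(r−a))·erfc((r−a)/√(4Dt) + √(μt)) ]. -/

import Mathlib

open MeasureTheory Real Set Filter Topology

/-- Hitting rate at the surface of a fully absorbing spherical receiver of radius `a`. -/
noncomputable def kappa (a D τ r : ℝ) : ℝ :=
  (a / r) * ((r - a) / Real.sqrt (4 * Real.pi * D * τ ^ 3)) *
    Real.exp (-(r - a) ^ 2 / (4 * D * τ))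

/-- The complementary error function `erfc x = (2/√π) ∫_x^∞ e^{−u²} du`. -/
noncomputable def erfc (x : ℝ) : ℝ :=
  (2 / Real.sqrt Real.pi) * ∫ u in Set.Ioi x, Real.exp (-u ^ 2)

lemma exp_neg_le_four_div_sq {x : ℝ} (hx : 0 < x) : Real.exp (-x) ≤ 4 / x ^ 2 := by
  have h1 : x / 2 ≤ Real.exp (x / 2) := by
    have := Real.add_one_le_exp (x / 2); linarith
  have h2 : x ^ 2 / 4 ≤ Real.exp x := by
    have := mul_le_mul h1 h1 (by positivity) (Real.exp_pos _).le
    rwa [← Real.exp_add, show x / 2 + x / 2 = x by ring,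
      show x / 2 * (x / 2) = x ^ 2 / 4 by ring] at this
  have hx2 : 0 < x ^ 2 / 4 := by positivity
  calc Real.exp (-x) = (Real.exp x)⁻¹ := Real.exp_neg x
    _ ≤ (x ^ 2 / 4)⁻¹ := by
        exact inv_anti₀ hx2 h2
    _ = 4 / x ^ 2 := by field_simp

lemma gauss_integrable : Integrable (fun u : ℝ => Real.exp (-u ^ 2)) := by
  have := integrable_exp_neg_mul_sq (by norm_num : (0:ℝ) < 1)
  simpa using this

lemma hasDerivAt_erfc (x : ℝ) :
    HasDerivAt erfc (-(2 / Real.sqrt Real.pi * Real.exp (-x ^ 2))) x := by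
  have hint := gauss_integrable
  have key : ∀ y : ℝ, erfc y = (2 / Real.sqrt Real.pi) *
      ((∫ u : ℝ, Real.exp (-u ^ 2)) - (∫ u in Iic (0:ℝ), Real.exp (-u ^ 2)))
      - (2 / Real.sqrt Real.pi) * ∫ u in (0:ℝ)..y, Real.exp (-u ^ 2) := by
    intro y
    have h1 := intervalIntegral.integral_Iic_add_Ioi (f := fun u : ℝ => Real.exp (-u ^ 2)) (b := y)
      hint.integrableOn hint.integrableOn
    have h2 := intervalIntegral.integral_Iic_sub_Iic (f := fun u : ℝ => Real.exp (-u ^ 2)) (a := (0:ℝ)) (b := y)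
      hint.integrableOn hint.integrableOn (μ := volume)
    unfold erfc
    have : (∫ u in Ioi y, Real.exp (-u ^ 2)) =
        ((∫ u : ℝ, Real.exp (-u ^ 2)) - (∫ u in Iic (0:ℝ), Real.exp (-u ^ 2)))
        - ∫ u in (0:ℝ)..y, Real.exp (-u ^ 2) := by linarith
    rw [this]; ring
  have hd : HasDerivAt (fun y : ℝ => ∫ u in (0:ℝ)..y, Real.exp (-u ^ 2)) (Real.exp (-x ^ 2)) x :=
    intervalIntegral.integral_hasDerivAt_right hint.intervalIntegrable
      hint.1.stronglyMeasurableAtFilter (by fun_prop)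
  have heq : erfc = fun y : ℝ => (2 / Real.sqrt Real.pi) *
      ((∫ u : ℝ, Real.exp (-u ^ 2)) - (∫ u in Iic (0:ℝ), Real.exp (-u ^ 2)))
      - (2 / Real.sqrt Real.pi) * ∫ u in (0:ℝ)..y, Real.exp (-u ^ 2) := funext key
  rw [heq]
  have := (hasDerivAt_const x ((2 / Real.sqrt Real.pi) *
      ((∫ u : ℝ, Real.exp (-u ^ 2)) - (∫ u in Iic (0:ℝ), Real.exp (-u ^ 2))))).sub
      (hd.const_mul (2 / Real.sqrt Real.pi))
  exact this.congr_deriv (by ring)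

lemma erfc_tendsto_atTop : Tendsto erfc atTop (𝓝 0) := by
  have hbound : ∀ x : ℝ, 1 ≤ x → erfc x ≤ 2 / Real.sqrt Real.pi * Real.exp (-x) := by
    intro x hx
    have h1 : (∫ u in Ioi x, Real.exp (-u ^ 2)) ≤ ∫ u in Ioi x, Real.exp (-u) := by
      apply setIntegral_mono_on gauss_integrable.integrableOn
      · have := exp_neg_integrableOn_Ioi x (by norm_num : (0:ℝ) < 1)
        simpa using this
      · exact measurableSet_Ioi
      · intro u hu
        have hu1 : 1 ≤ u := hx.trans (le_of_lt hu)
        apply Real.exp_le_exp.2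
        nlinarith
    have h2 : (∫ u in Ioi x, Real.exp (-u)) = Real.exp (-x) := integral_exp_neg_Ioi x
    unfold erfc
    have hc : (0:ℝ) ≤ 2 / Real.sqrt Real.pi := by positivity
    calc (2 / Real.sqrt Real.pi) * ∫ u in Ioi x, Real.exp (-u ^ 2)
        ≤ (2 / Real.sqrt Real.pi) * Real.exp (-x) := by
          apply mul_le_mul_of_nonneg_left _ hc; rw [← h2]; exact h1
      _ = _ := rfl
  have hnn : ∀ x : ℝ, 0 ≤ erfc x := by
    intro x
    unfold erfc
    apply mul_nonneg (by positivity)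
    apply setIntegral_nonneg measurableSet_Ioi
    intro u _; positivity
  have htend : Tendsto (fun x : ℝ => 2 / Real.sqrt Real.pi * Real.exp (-x)) atTop (𝓝 0) := by
    have := (Real.tendsto_exp_neg_atTop_nhds_zero).const_mul (2 / Real.sqrt Real.pi)
    simpa using this
  apply tendsto_of_tendsto_of_tendsto_of_le_of_le' tendsto_const_nhds htend
  · exact Eventually.of_forall hnn
  · filter_upwards [eventually_ge_atTop (1:ℝ)] with x hx using hbound x hx

lemma core (c m : ℝ) (hc : 0 < c) (hm : 0 ≤ m) :
    ∀ t : ℝ, 0 < t →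
    (∫ τ in Ioc (0:ℝ) t, c / (Real.sqrt Real.pi * Real.sqrt (τ ^ 3)) * Real.exp (-(c ^ 2 / τ) - m ^ 2 * τ))
    = 1 / 2 * (Real.exp (-(2 * c * m)) * erfc (c / Real.sqrt t - m * Real.sqrt t)
      + Real.exp (2 * c * m) * erfc (c / Real.sqrt t + m * Real.sqrt t)) := by
  set g : ℝ → ℝ := fun τ => c / (Real.sqrt Real.pi * Real.sqrt (τ ^ 3)) * Real.exp (-(c ^ 2 / τ) - m ^ 2 * τ) with hgdef
  set F : ℝ → ℝ := fun u => ∫ τ in Ioc (0:ℝ) u, g τ with hFdef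
  set G : ℝ → ℝ := fun u => 1 / 2 * (Real.exp (-(2 * c * m)) * erfc (c / Real.sqrt u - m * Real.sqrt u)
      + Real.exp (2 * c * m) * erfc (c / Real.sqrt u + m * Real.sqrt u)) with hGdef
  suffices h : ∀ t : ℝ, 0 < t → F t = G t from h
  have hmeas : Measurable g := by fun_prop
  have hgnn : ∀ τ : ℝ, 0 ≤ g τ := fun τ => by positivity
  have hgle : ∀ τ : ℝ, 0 < τ → g τ ≤ 4 * Real.sqrt τ / (Real.sqrt Real.pi * c ^ 3) := by
    intro τ hτ
    have hst : Real.sqrt τ * Real.sqrt τ = τ := Real.mul_self_sqrt hτ.le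
    have hsτ : 0 < Real.sqrt τ := Real.sqrt_pos.2 hτ
    have hsq : Real.sqrt (τ ^ 3) = τ * Real.sqrt τ := by
      rw [show τ ^ 3 = τ ^ 2 * τ by ring, Real.sqrt_mul (sq_nonneg τ), Real.sqrt_sq hτ.le]
    have h1 : Real.exp (-(c ^ 2 / τ) - m ^ 2 * τ) ≤ 4 * τ ^ 2 / c ^ 4 := by
      calc Real.exp (-(c ^ 2 / τ) - m ^ 2 * τ) ≤ Real.exp (-(c ^ 2 / τ)) := by
            apply Real.exp_le_exp.2; nlinarith [sq_nonneg m, hτ.le]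
        _ ≤ 4 / (c ^ 2 / τ) ^ 2 := exp_neg_le_four_div_sq (by positivity)
        _ = 4 * τ ^ 2 / c ^ 4 := by field_simp
    have hπ : 0 < Real.sqrt Real.pi := Real.sqrt_pos.2 Real.pi_pos
    calc g τ = c / (Real.sqrt Real.pi * (τ * Real.sqrt τ)) * Real.exp (-(c ^ 2 / τ) - m ^ 2 * τ) := by
          rw [hgdef]; simp only; rw [hsq]
      _ ≤ c / (Real.sqrt Real.pi * (τ * Real.sqrt τ)) * (4 * τ ^ 2 / c ^ 4) := by
          apply mul_le_mul_of_nonneg_left h1 (by positivity)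
      _ = 4 * Real.sqrt τ / (Real.sqrt Real.pi * c ^ 3) := by
          rw [div_mul_div_comm, div_eq_div_iff (by positivity) (by positivity)]
          linear_combination (-(4 * c ^ 4 * τ * Real.sqrt Real.pi)) * hst
  have hint : ∀ t : ℝ, 0 < t → IntegrableOn g (Ioc 0 t) := by
    intro t ht
    apply Integrable.mono' (g := fun _ : ℝ => 4 * Real.sqrt t / (Real.sqrt Real.pi * c ^ 3))
      (integrableOn_const measure_Ioc_lt_top.ne)
      (hmeas.aestronglyMeasurable)
    filter_upwards [ae_restrict_mem measurableSet_Ioc] with τ hτ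
    rw [Real.norm_of_nonneg (hgnn τ)]
    calc g τ ≤ 4 * Real.sqrt τ / (Real.sqrt Real.pi * c ^ 3) := hgle τ hτ.1
      _ ≤ 4 * Real.sqrt t / (Real.sqrt Real.pi * c ^ 3) := by
          have : Real.sqrt τ ≤ Real.sqrt t := Real.sqrt_le_sqrt hτ.2
          gcongr
  have hπ : (0:ℝ) < Real.sqrt Real.pi := Real.sqrt_pos.2 Real.pi_pos
  have hFder : ∀ u : ℝ, 0 < u → HasDerivAt F (g u) u := by
    intro u hu
    have hii : IntervalIntegrable g volume 0 u := by
      rw [intervalIntegrable_iff_integrableOn_Ioc_of_le hu.le]; exact hint u hu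
    have hcont : ContinuousAt g u := by
      have h1 : ContinuousAt (fun τ : ℝ => c / (Real.sqrt Real.pi * Real.sqrt (τ ^ 3))) u := by
        apply ContinuousAt.div continuousAt_const
        · exact continuousAt_const.mul ((Real.continuous_sqrt.comp (continuous_pow 3)).continuousAt)
        · positivity
      have h2 : ContinuousAt (fun τ : ℝ => Real.exp (-(c ^ 2 / τ) - m ^ 2 * τ)) u := by
        apply Real.continuous_exp.continuousAt.comp
        exact ((continuousAt_const.div continuousAt_id hu.ne').neg).sub
          (continuousAt_const.mul continuousAt_id)
      exact h1.mul h2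
    have hd0 : HasDerivAt (fun v : ℝ => ∫ τ in (0:ℝ)..v, g τ) (g u) u :=
      intervalIntegral.integral_hasDerivAt_right hii
        ⟨univ, univ_mem, hmeas.aestronglyMeasurable⟩ hcont
    apply hd0.congr_of_eventuallyEq
    filter_upwards [isOpen_Ioi.mem_nhds hu] with v hv
    rw [hFdef]
    exact (intervalIntegral.integral_of_le (le_of_lt hv)).symm
  have hGder : ∀ u : ℝ, 0 < u → HasDerivAt G (g u) u := by
    intro t ht
    set s := Real.sqrt t with hs
    have hs0 : 0 < s := Real.sqrt_pos.2 ht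
    have hss : s * s = t := Real.mul_self_sqrt ht.le
    have hsd : HasDerivAt Real.sqrt (1 / (2 * s)) t := Real.hasDerivAt_sqrt ht.ne'
    have hinv : HasDerivAt (fun u : ℝ => c / Real.sqrt u) (c * (-(1 / (2 * s)) / s ^ 2)) t := by
      have h := (hsd.inv hs0.ne').const_mul c
      simpa [div_eq_mul_inv] using h
    have hu1 : HasDerivAt (fun u : ℝ => c / Real.sqrt u - m * Real.sqrt u)
        (c * (-(1 / (2 * s)) / s ^ 2) - m * (1 / (2 * s))) t := hinv.sub (hsd.const_mul m)
    have hu2 : HasDerivAt (fun u : ℝ => c / Real.sqrt u + m * Real.sqrt u)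
        (c * (-(1 / (2 * s)) / s ^ 2) + m * (1 / (2 * s))) t := hinv.add (hsd.const_mul m)
    have he1 : HasDerivAt (fun u : ℝ => erfc (c / Real.sqrt u - m * Real.sqrt u))
        (-(2 / Real.sqrt Real.pi * Real.exp (-(c / s - m * s) ^ 2)) *
          (c * (-(1 / (2 * s)) / s ^ 2) - m * (1 / (2 * s)))) t := by
      have := (hasDerivAt_erfc (c / s - m * s)).comp t hu1
      simpa [Function.comp_def] using this
    have he2 : HasDerivAt (fun u : ℝ => erfc (c / Real.sqrt u + m * Real.sqrt u))
        (-(2 / Real.sqrt Real.pi * Real.exp (-(c / s + m * s) ^ 2)) *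
          (c * (-(1 / (2 * s)) / s ^ 2) + m * (1 / (2 * s)))) t := by
      have := (hasDerivAt_erfc (c / s + m * s)).comp t hu2
      simpa [Function.comp_def] using this
    have hGd := (((he1.const_mul (Real.exp (-(2 * c * m)))).add
        (he2.const_mul (Real.exp (2 * c * m)))).const_mul (1 / 2 : ℝ))
    have hval : (1 / 2 : ℝ) * (Real.exp (-(2 * c * m)) *
          (-(2 / Real.sqrt Real.pi * Real.exp (-(c / s - m * s) ^ 2)) *
            (c * (-(1 / (2 * s)) / s ^ 2) - m * (1 / (2 * s)))) +
        Real.exp (2 * c * m) *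
          (-(2 / Real.sqrt Real.pi * Real.exp (-(c / s + m * s) ^ 2)) *
            (c * (-(1 / (2 * s)) / s ^ 2) + m * (1 / (2 * s))))) = g t := by
      have hXY : Real.exp (-(2 * c * m)) * Real.exp (2 * c * m) = 1 := by
        rw [← Real.exp_add]; simp
      have hsq3 : Real.sqrt (t ^ 3) = t * s := by
        rw [show t ^ 3 = t ^ 2 * t by ring, Real.sqrt_mul (sq_nonneg t), Real.sqrt_sq ht.le]
      rw [hgdef]; simp only
      set E := Real.exp (-(c ^ 2 / t) - m ^ 2 * t) with hE
      have e1 : Real.exp (-(c / s - m * s) ^ 2) = Real.exp (2 * c * m) * E := by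
        rw [hE, ← Real.exp_add]; congr 1; rw [← hss]; field_simp; ring
      have e2 : Real.exp (-(c / s + m * s) ^ 2) = Real.exp (-(2 * c * m)) * E := by
        rw [hE, ← Real.exp_add]; congr 1; rw [← hss]; field_simp; ring
      clear_value E
      rw [e1, e2, hsq3, ← hss]
      field_simp
      linear_combination (2 * c * E) * hXY
    rw [← hval]
    exact hGd
  have hF0 : Tendsto F (𝓝[>] (0:ℝ)) (𝓝 0) := by
    apply squeeze_zero_norm'
    · filter_upwards [self_mem_nhdsWithin] with u hu
      have hu : (0:ℝ) < u := hu
      have hb := norm_setIntegral_le_of_norm_le_const (μ := volume) (s := Ioc (0:ℝ) u)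
        (C := 4 * Real.sqrt u / (Real.sqrt Real.pi * c ^ 3)) measure_Ioc_lt_top
        (fun x hx => by rw [Real.norm_of_nonneg (hgnn x)]; calc g x ≤ 4 * Real.sqrt x / (Real.sqrt Real.pi * c ^ 3) := hgle x hx.1
                          _ ≤ 4 * Real.sqrt u / (Real.sqrt Real.pi * c ^ 3) := by
                              have : Real.sqrt x ≤ Real.sqrt u := Real.sqrt_le_sqrt hx.2
                              gcongr)
      calc ‖F u‖ ≤ 4 * Real.sqrt u / (Real.sqrt Real.pi * c ^ 3) * (volume (Ioc (0:ℝ) u)).toReal := hb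
        _ = 4 * Real.sqrt u / (Real.sqrt Real.pi * c ^ 3) * u := by
            rw [Real.volume_Ioc, show u - 0 = u by ring, ENNReal.toReal_ofReal hu.le]
    · have hcont : Continuous (fun u : ℝ => 4 * Real.sqrt u / (Real.sqrt Real.pi * c ^ 3) * u) := by
        continuity
      have := (hcont.tendsto 0).mono_left (nhdsWithin_le_nhds (s := Ioi (0:ℝ)))
      simpa using this
  have hsqrt_tendsto : Tendsto (fun u : ℝ => Real.sqrt u) (𝓝[>] (0:ℝ)) (𝓝[>] (0:ℝ)) := by
    apply tendsto_nhdsWithin_of_tendsto_nhds_of_eventually_within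
    · have := (Real.continuous_sqrt.tendsto 0).mono_left (nhdsWithin_le_nhds (s := Ioi (0:ℝ)))
      simpa using this
    · filter_upwards [self_mem_nhdsWithin] with u hu
      exact Real.sqrt_pos.2 hu
  have hcs : Tendsto (fun u : ℝ => c / Real.sqrt u) (𝓝[>] (0:ℝ)) atTop := by
    have h2 := (tendsto_inv_nhdsGT_zero.comp hsqrt_tendsto).const_mul_atTop hc
    simpa [div_eq_mul_inv, Function.comp] using h2
  have hms : Tendsto (fun u : ℝ => m * Real.sqrt u) (𝓝[>] (0:ℝ)) (𝓝 0) := by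
    have h3 := ((Real.continuous_sqrt.tendsto 0).mono_left
      (nhdsWithin_le_nhds (s := Ioi (0:ℝ)))).const_mul m
    simpa using h3
  have hA : Tendsto (fun u : ℝ => c / Real.sqrt u - m * Real.sqrt u) (𝓝[>] (0:ℝ)) atTop := by
    have := hcs.atTop_add hms.neg
    simpa [sub_eq_add_neg] using this
  have hB : Tendsto (fun u : ℝ => c / Real.sqrt u + m * Real.sqrt u) (𝓝[>] (0:ℝ)) atTop :=
    hcs.atTop_add hms
  have hG0 : Tendsto G (𝓝[>] (0:ℝ)) (𝓝 0) := by
    have h1 := erfc_tendsto_atTop.comp hA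
    have h2 := erfc_tendsto_atTop.comp hB
    have h3 := (((h1.const_mul (Real.exp (-(2 * c * m)))).add
      (h2.const_mul (Real.exp (2 * c * m)))).const_mul (1 / 2 : ℝ))
    rw [hGdef]
    simpa [Function.comp] using h3
  have hHder : ∀ u : ℝ, 0 < u → HasDerivAt (fun v => F v - G v) 0 u := fun u hu => by
    exact ((hFder u hu).sub (hGder u hu)).congr_deriv (sub_self _)
  have hconst : ∀ p q : ℝ, 0 < p → p < q → F q - G q = F p - G p := by
    intro p q hp hpq
    obtain ⟨ξ, hξ, h0⟩ := exists_hasDerivAt_eq_slope (fun v => F v - G v) (fun _ => 0) hpq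
      (fun x hx => ((hHder x (lt_of_lt_of_le hp hx.1)).continuousAt.continuousWithinAt))
      (fun x hx => hHder x (hp.trans hx.1))
    have hne : q - p ≠ 0 := sub_ne_zero.2 hpq.ne'
    have : F q - G q - (F p - G p) = 0 := by
      field_simp at h0
      linarith
    linarith
  intro t ht
  have hmem : Ioo (0:ℝ) t ∈ 𝓝[>] (0:ℝ) := Ioo_mem_nhdsGT_of_mem ⟨le_refl 0, ht⟩
  have hev : (fun _ : ℝ => F t - G t) =ᶠ[𝓝[>] (0:ℝ)] (fun u => F u - G u) := by
    filter_upwards [hmem] with u hu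
    exact hconst u t hu.1 hu.2
  have h1 : Tendsto (fun u => F u - G u) (𝓝[>] (0:ℝ)) (𝓝 (F t - G t)) :=
    Tendsto.congr' hev tendsto_const_nhds
  have h2 : Tendsto (fun u => F u - G u) (𝓝[>] (0:ℝ)) (𝓝 0) := by
    have h2' := hF0.sub hG0
    rw [sub_zero] at h2'
    exact h2'
  have := tendsto_nhds_unique h1 h2
  linarith


theorem cir_closed_form (a D μ t r : ℝ)
    (ha : 0 < a) (hD : 0 < D) (hμ : 0 ≤ μ) (ht : 0 < t) (hr : a < r) :
    ∫ τ in Set.Ioc (0 : ℝ) t, kappa a D τ r * Real.exp (-(μ * τ)) =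
      (a / (2 * r)) *
        (Real.exp (-(Real.sqrt (μ / D) * (r - a))) *
            erfc ((r - a) / Real.sqrt (4 * D * t) - Real.sqrt (μ * t)) +
          Real.exp (Real.sqrt (μ / D) * (r - a)) *
            erfc ((r - a) / Real.sqrt (4 * D * t) + Real.sqrt (μ * t))) := by
  have hb : 0 < r - a := sub_pos.2 hr
  set c : ℝ := (r - a) / (2 * Real.sqrt D) with hc_def
  set m : ℝ := Real.sqrt μ with hm_def
  have hsD : 0 < Real.sqrt D := Real.sqrt_pos.2 hD
  have hsD2 : Real.sqrt D ^ 2 = D := Real.sq_sqrt hD.le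
  have hsπ : 0 < Real.sqrt Real.pi := Real.sqrt_pos.2 Real.pi_pos
  have hsπ2 : Real.sqrt Real.pi ^ 2 = Real.pi := Real.sq_sqrt Real.pi_pos.le
  have hc : 0 < c := by positivity
  have hm : 0 ≤ m := Real.sqrt_nonneg μ
  have hm2 : m ^ 2 = μ := Real.sq_sqrt hμ
  -- step 1: rewrite the integrand
  have hcongr : ∫ τ in Set.Ioc (0 : ℝ) t, kappa a D τ r * Real.exp (-(μ * τ)) =
      ∫ τ in Set.Ioc (0 : ℝ) t,
        (a / r) * (c / (Real.sqrt Real.pi * Real.sqrt (τ ^ 3)) *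
          Real.exp (-(c ^ 2 / τ) - m ^ 2 * τ)) := by
    apply setIntegral_congr_fun measurableSet_Ioc
    intro τ hτ
    have hτ0 : 0 < τ := hτ.1
    have h4 : Real.sqrt (4 * Real.pi * D * τ ^ 3) =
        2 * Real.sqrt D * Real.sqrt Real.pi * Real.sqrt (τ ^ 3) := by
      rw [show 4 * Real.pi * D * τ ^ 3 = (2 * Real.sqrt D * Real.sqrt Real.pi) ^ 2 * τ ^ 3 by
        rw [mul_pow, mul_pow, hsD2, hsπ2]; ring]
      rw [Real.sqrt_mul (by positivity), Real.sqrt_sq (by positivity)]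
    have hsτ3 : 0 < Real.sqrt (τ ^ 3) := Real.sqrt_pos.2 (by positivity)
    have hexp : Real.exp (-(r - a) ^ 2 / (4 * D * τ)) * Real.exp (-(μ * τ)) =
        Real.exp (-(c ^ 2 / τ) - m ^ 2 * τ) := by
      rw [← Real.exp_add]
      congr 1
      have hc2 : c ^ 2 = (r - a) ^ 2 / (4 * D) := by
        rw [hc_def, div_pow, mul_pow, hsD2]; ring
      rw [hm2, hc2]
      field_simp
      ring
    unfold kappa
    dsimp only
    rw [h4]
    rw [mul_assoc, hexp]
    rw [hc_def]
    field_simp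
  rw [hcongr, integral_const_mul, core c m hc hm t ht]
  -- step 2: rewrite the closed form
  have hst : 0 < Real.sqrt t := Real.sqrt_pos.2 ht
  have e1 : 2 * c * m = Real.sqrt (μ / D) * (r - a) := by
    have hdiv : Real.sqrt (μ / D) = Real.sqrt μ / Real.sqrt D := Real.sqrt_div hμ D
    rw [hdiv, hc_def, hm_def]
    field_simp
  have e2 : c / Real.sqrt t = (r - a) / Real.sqrt (4 * D * t) := by
    have h4 : Real.sqrt (4 * D * t) = 2 * Real.sqrt D * Real.sqrt t := by
      rw [show 4 * D * t = (2 * Real.sqrt D) ^ 2 * t by rw [mul_pow, hsD2]; ring]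
      rw [Real.sqrt_mul (by positivity), Real.sqrt_sq (by positivity)]
    rw [h4, hc_def]
    field_simp
  have e3 : m * Real.sqrt t = Real.sqrt (μ * t) := (Real.sqrt_mul hμ t).symm
  rw [e1, e2, e3]
  ring
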